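/- Let 0 < γ < 1 and let (α_k) be a nonincreasing sequence of positive reals with ∑ α_k² < ∞. Then for every K' ≥ 1, ∑_{k=1}^{K'} ∑_{r=1}^{k-1} α_{r-1} γ^{k-r} ∑_{l=1}^{k-1} α_{l-1} γ^{k-l} ≤ (1/(1-γ)²) ∑_{k=0}^{K'} α_k². -/

import Mathlib

/-- Any finite sum of distinct powers of `γ ∈ [0,1)` is at most `1/(1-γ)`. -/
lemma geom_finset_bound (γ : ℝ) (h0 : 0 ≤ γ) (h1 : γ < 1) (t : Finset ℕ) :
    ∑ j ∈ t, γ ^ j ≤ 1 / (1 - γ) := by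
  calc ∑ j ∈ t, γ ^ j ≤ ∑' j : ℕ, γ ^ j :=
        Summable.sum_le_tsum t (fun j _ => pow_nonneg h0 j) (summable_geometric_of_lt_one h0 h1)
    _ = (1 - γ)⁻¹ := tsum_geometric_of_lt_one h0 h1
    _ = 1 / (1 - γ) := (one_div _).symm

lemma geom_exp_bound (γ : ℝ) (h0 : 0 ≤ γ) (h1 : γ < 1) (s : Finset ℕ) (e : ℕ → ℕ)
    (he : Set.InjOn e s) : ∑ r ∈ s, γ ^ (e r) ≤ 1 / (1 - γ) := by
  rw [← Finset.sum_image (fun a ha b hb hab => he ha hb hab)]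
  exact geom_finset_bound γ h0 h1 _

theorem stmt_0 (γ : ℝ) (hγ : 0 < γ) (hγ1 : γ < 1)
    (α : ℕ → ℝ) (hpos : ∀ k, 0 < α k) (hmono : ∀ k, α (k + 1) ≤ α k)
    (hsum : Summable fun k => (α k) ^ 2) :
    ∀ K' : ℕ, 1 ≤ K' →
      ∑ k ∈ Finset.Icc 1 K',
          (∑ r ∈ Finset.Icc 1 (k - 1), α (r - 1) * γ ^ (k - r)) *
            (∑ l ∈ Finset.Icc 1 (k - 1), α (l - 1) * γ ^ (k - l)) ≤
        (1 / (1 - γ) ^ 2) * ∑ k ∈ Finset.Icc 0 K', (α k) ^ 2 := by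
  intro K' _
  have hγ0 : (0:ℝ) ≤ γ := hγ.le
  have h1γ : (0:ℝ) < 1 - γ := by linarith
  set C : ℝ := 1 / (1 - γ) with hC
  have hCpos : 0 < C := by positivity
  -- Step 1: per-k Cauchy–Schwarz bound
  have step1 : ∀ k : ℕ,
      (∑ r ∈ Finset.Icc 1 (k - 1), α (r - 1) * γ ^ (k - r)) *
        (∑ l ∈ Finset.Icc 1 (k - 1), α (l - 1) * γ ^ (k - l)) ≤
      C * ∑ r ∈ Finset.Icc 1 (k - 1), (α (r - 1)) ^ 2 * γ ^ (k - r) := by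
    intro k
    have hcs := Finset.sum_mul_sq_le_sq_mul_sq (Finset.Icc 1 (k - 1))
      (fun r => Real.sqrt (γ ^ (k - r))) (fun r => α (r - 1) * Real.sqrt (γ ^ (k - r)))
    have h1 : ∀ r : ℕ, Real.sqrt (γ ^ (k - r)) * (α (r - 1) * Real.sqrt (γ ^ (k - r)))
        = α (r - 1) * γ ^ (k - r) := by
      intro r
      rw [show Real.sqrt (γ ^ (k - r)) * (α (r - 1) * Real.sqrt (γ ^ (k - r)))
          = α (r - 1) * (Real.sqrt (γ ^ (k - r)) * Real.sqrt (γ ^ (k - r))) by ring,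
        Real.mul_self_sqrt (pow_nonneg hγ0 _)]
    have h2 : ∀ r : ℕ, (Real.sqrt (γ ^ (k - r))) ^ 2 = γ ^ (k - r) :=
      fun r => Real.sq_sqrt (pow_nonneg hγ0 _)
    have h3 : ∀ r : ℕ, (α (r - 1) * Real.sqrt (γ ^ (k - r))) ^ 2
        = (α (r - 1)) ^ 2 * γ ^ (k - r) := by
      intro r; rw [mul_pow, h2]
    simp only [h1, h2, h3] at hcs
    have hgeom : ∑ r ∈ Finset.Icc 1 (k - 1), γ ^ (k - r) ≤ C := by
      apply geom_exp_bound γ hγ0 hγ1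
      intro a ha b hb hab
      simp only [Finset.coe_Icc, Set.mem_Icc] at ha hb
      omega
    have hQnn : 0 ≤ ∑ r ∈ Finset.Icc 1 (k - 1), (α (r - 1)) ^ 2 * γ ^ (k - r) :=
      Finset.sum_nonneg fun r _ => mul_nonneg (sq_nonneg _) (pow_nonneg hγ0 _)
    calc (∑ r ∈ Finset.Icc 1 (k - 1), α (r - 1) * γ ^ (k - r)) *
          (∑ l ∈ Finset.Icc 1 (k - 1), α (l - 1) * γ ^ (k - l))
        = (∑ r ∈ Finset.Icc 1 (k - 1), α (r - 1) * γ ^ (k - r)) ^ 2 := by ring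
      _ ≤ (∑ r ∈ Finset.Icc 1 (k - 1), γ ^ (k - r)) *
            ∑ r ∈ Finset.Icc 1 (k - 1), (α (r - 1)) ^ 2 * γ ^ (k - r) := hcs
      _ ≤ C * ∑ r ∈ Finset.Icc 1 (k - 1), (α (r - 1)) ^ 2 * γ ^ (k - r) :=
          mul_le_mul_of_nonneg_right hgeom hQnn
  -- Step 2: sum over k and swap order of summation
  have swap : ∑ k ∈ Finset.Icc 1 K', ∑ r ∈ Finset.Icc 1 (k - 1),
        (α (r - 1)) ^ 2 * γ ^ (k - r)
      = ∑ r ∈ Finset.Icc 1 K', ∑ k ∈ Finset.Icc (r + 1) K',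
        (α (r - 1)) ^ 2 * γ ^ (k - r) := by
    apply Finset.sum_comm'
    intro k r
    simp only [Finset.mem_Icc]
    omega
  have step2 : ∑ r ∈ Finset.Icc 1 K', ∑ k ∈ Finset.Icc (r + 1) K',
        (α (r - 1)) ^ 2 * γ ^ (k - r)
      ≤ C * ∑ k ∈ Finset.Icc 0 K', (α k) ^ 2 := by
    have hinner : ∀ r : ℕ, ∑ k ∈ Finset.Icc (r + 1) K',
        (α (r - 1)) ^ 2 * γ ^ (k - r) ≤ (α (r - 1)) ^ 2 * C := by
      intro r
      rw [← Finset.mul_sum]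
      apply mul_le_mul_of_nonneg_left _ (sq_nonneg _)
      apply geom_exp_bound γ hγ0 hγ1
      intro a ha b hb hab
      simp only [Finset.coe_Icc, Set.mem_Icc] at ha hb
      dsimp only at hab
      omega
    calc ∑ r ∈ Finset.Icc 1 K', ∑ k ∈ Finset.Icc (r + 1) K',
          (α (r - 1)) ^ 2 * γ ^ (k - r)
        ≤ ∑ r ∈ Finset.Icc 1 K', (α (r - 1)) ^ 2 * C :=
          Finset.sum_le_sum fun r _ => hinner r
      _ = C * ∑ r ∈ Finset.Icc 1 K', (α (r - 1)) ^ 2 := by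
          rw [Finset.mul_sum]; exact Finset.sum_congr rfl fun r _ => mul_comm _ _
      _ ≤ C * ∑ k ∈ Finset.Icc 0 K', (α k) ^ 2 := by
          apply mul_le_mul_of_nonneg_left _ hCpos.le
          rw [show (∑ r ∈ Finset.Icc 1 K', (α (r - 1)) ^ 2)
              = ∑ j ∈ (Finset.Icc 1 K').image (· - 1), (α j) ^ 2 by
            rw [Finset.sum_image]
            intro a ha b hb hab
            simp only [Finset.coe_Icc, Set.mem_Icc] at ha hb hab
            omega]
          apply Finset.sum_le_sum_of_subset_of_nonneg
          · intro j hj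
            simp only [Finset.mem_image, Finset.mem_Icc] at hj ⊢
            omega
          · intro j _ _; exact sq_nonneg _
  -- Combine
  calc ∑ k ∈ Finset.Icc 1 K',
        (∑ r ∈ Finset.Icc 1 (k - 1), α (r - 1) * γ ^ (k - r)) *
          (∑ l ∈ Finset.Icc 1 (k - 1), α (l - 1) * γ ^ (k - l))
      ≤ ∑ k ∈ Finset.Icc 1 K',
          C * ∑ r ∈ Finset.Icc 1 (k - 1), (α (r - 1)) ^ 2 * γ ^ (k - r) :=
        Finset.sum_le_sum fun k _ => step1 k
    _ = C * ∑ k ∈ Finset.Icc 1 K', ∑ r ∈ Finset.Icc 1 (k - 1),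
          (α (r - 1)) ^ 2 * γ ^ (k - r) := by rw [Finset.mul_sum]
    _ ≤ C * (C * ∑ k ∈ Finset.Icc 0 K', (α k) ^ 2) := by
        apply mul_le_mul_of_nonneg_left _ hCpos.le
        rw [swap]; exact step2
    _ = (1 / (1 - γ) ^ 2) * ∑ k ∈ Finset.Icc 0 K', (α k) ^ 2 := by
        have hCC : C * C = 1 / (1 - γ) ^ 2 := by
          rw [hC, div_mul_div_comm, one_mul, sq]
        rw [← mul_assoc, hCC]
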